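/- If G is a po-group and G₀ is a convex subset of G⁺ containing 0, then (G₀; +, 0), with addition being the group addition restricted to pairs of elements of G₀ whose sum is again in G₀, is a generalized pseudo effect algebra. -/

import Mathlib

open scoped Classical

/-- A generalized pseudo effect algebra (GPEA): a partial algebra `(E; +, 0)`
satisfying (GP1)-(GP5). The partial addition is modelled by an `Option`-valued
operation: `add a b = some c` means `a + b` is defined and equals `c`. -/
structure GPEA (E : Type) where
  add : E → E → Option E
  zero : E
  assoc_ex : ∀ a b c : E,
    (∃ ab, add a b = some ab ∧ (add ab c).isSome) ↔
    (∃ bc, add b c = some bc ∧ (add a bc).isSome)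
  assoc_eq : ∀ a b c ab bc : E, add a b = some ab → add b c = some bc →
    add ab c = add a bc
  exch : ∀ a b ab : E, add a b = some ab →
    (∃ d, add d a = some ab) ∧ (∃ e, add b e = some ab)
  cancel_left : ∀ a b c x : E, add a b = some x → add a c = some x → b = c
  cancel_right : ∀ a b c x : E, add b a = some x → add c a = some x → b = c
  pos : ∀ a b : E, add a b = some zero → a = zero ∧ b = zero
  add_zero : ∀ a : E, add a zero = some a
  zero_add : ∀ a : E, add zero a = some a

/-- The induced order of a GPEA: `a ≤ b` iff `∃ c, a + c = b`. -/
def GPEA.le {E : Type} (G : GPEA E) (a b : E) : Prop := ∃ c, G.add a c = some b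

/-- `b ⊖ a` : the element `c` with `c + a = b` (if it exists, else `0`). -/
noncomputable def GPEA.lsub {E : Type} (G : GPEA E) (b a : E) : E :=
  if h : ∃ c, G.add c a = some b then h.choose else G.zero

/-- `a ⊘ b` : the element `c` with `a + c = b` (if it exists, else `0`). -/
noncomputable def GPEA.rsub {E : Type} (G : GPEA E) (a b : E) : E :=
  if h : ∃ c, G.add a c = some b then h.choose else G.zero

/-- A GPEA is directed if any two elements have a common upper bound. -/
def GPEA.directed {E : Type} (G : GPEA E) : Prop :=
  ∀ a b : E, ∃ c, G.le a c ∧ G.le b c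

/-- A pseudo effect algebra (PEA): a partial algebra `(E; +, 0, 1)`
satisfying axioms (i)-(iv). -/
structure PEA (E : Type) where
  add : E → E → Option E
  zero : E
  one : E
  assoc_ex : ∀ a b c : E,
    (∃ ab, add a b = some ab ∧ (add ab c).isSome) ↔
    (∃ bc, add b c = some bc ∧ (add a bc).isSome)
  assoc_eq : ∀ a b c ab bc : E, add a b = some ab → add b c = some bc →
    add ab c = add a bc
  compl_right : ∀ a : E, ∃! d, add a d = some one
  compl_left : ∀ a : E, ∃! e, add e a = some one
  exch : ∀ a b ab : E, add a b = some ab →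
    (∃ d, add d a = some ab) ∧ (∃ e, add b e = some ab)
  one_left : ∀ a : E, (add one a).isSome → a = zero
  one_right : ∀ a : E, (add a one).isSome → a = zero

/-- The induced order of a PEA. -/
def PEA.le {E : Type} (P : PEA E) (a b : E) : Prop := ∃ c, P.add a c = some b

/-- `a⁻` : the unique element with `a⁻ + a = 1`. -/
noncomputable def PEA.negL {E : Type} (P : PEA E) (a : E) : E :=
  (P.compl_left a).choose

/-- `a∼` : the unique element with `a + a∼ = 1`. -/
noncomputable def PEA.negR {E : Type} (P : PEA E) (a : E) : E :=
  (P.compl_right a).choose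

/-- `E` is `λ,ρ`-weakly commutative. -/
def GPEA.lrWC {E I : Type} (G : GPEA E) (l r : I ≃ I) : Prop :=
  (∀ f a : I → E, ∀ i : I,
    ((G.add (f (r.symm i)) (a i)).isSome ↔ (G.add (a i) (f (l.symm i))).isSome)) ∧
  (∀ g b : I → E, ∀ i : I,
    ((G.add (g (l.symm i)) (b i)).isSome ↔ (G.add (b i) (g (r.symm i))).isSome))

/-- The partial addition of the kite `K_I^{λ,ρ}(E)`: the carrier is
`(I → E) ⊕ (I → E)`, `Sum.inl` being the lower copy `E^I` and `Sum.inr` the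
upper copy `(Ē)^I`; rules (I)-(IV). -/
noncomputable def kiteAdd {E I : Type} (G : GPEA E) (l r : I ≃ I) :
    (I → E) ⊕ (I → E) → (I → E) ⊕ (I → E) → Option ((I → E) ⊕ (I → E))
  | Sum.inr _, Sum.inr _ => none
  | Sum.inr a, Sum.inl f =>
      if _ : ∀ i, G.le (f (r.symm i)) (a i) then
        some (Sum.inr fun i => G.rsub (f (r.symm i)) (a i))
      else none
  | Sum.inl f, Sum.inr a =>
      if _ : ∀ i, G.le (f (l.symm i)) (a i) then
        some (Sum.inr fun i => G.lsub (a i) (f (l.symm i)))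
      else none
  | Sum.inl f, Sum.inl g =>
      if h : ∀ j, (G.add (f j) (g j)).isSome then
        some (Sum.inl fun j => (G.add (f j) (g j)).get (h j))
      else none

/-- The bottom element `0 = ⟨0_j⟩` of the kite. -/
def kiteZero (E I : Type) (G : GPEA E) : (I → E) ⊕ (I → E) :=
  Sum.inl fun _ => G.zero

/-- The top element `1 = ⟨0̄_i⟩` of the kite. -/
def kiteOne (E I : Type) (G : GPEA E) : (I → E) ⊕ (I → E) :=
  Sum.inr fun _ => G.zero

/-- Riesz decomposition property RDP for a GPEA. -/
def GPEA.RDP {E : Type} (G : GPEA E) : Prop :=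
  ∀ a1 a2 b1 b2 x : E, G.add a1 a2 = some x → G.add b1 b2 = some x →
    ∃ c11 c12 c21 c22 : E, G.add c11 c12 = some a1 ∧ G.add c21 c22 = some a2 ∧
      G.add c11 c21 = some b1 ∧ G.add c12 c22 = some b2

/-- RDP₁ for a GPEA. -/
def GPEA.RDP1 {E : Type} (G : GPEA E) : Prop :=
  ∀ a1 a2 b1 b2 x : E, G.add a1 a2 = some x → G.add b1 b2 = some x →
    ∃ c11 c12 c21 c22 : E, G.add c11 c12 = some a1 ∧ G.add c21 c22 = some a2 ∧
      G.add c11 c21 = some b1 ∧ G.add c12 c22 = some b2 ∧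
      (∀ u v : E, G.le u c12 → G.le v c21 → G.add u v = G.add v u)

/-- RDP₂ for a GPEA (`c₁₂ ∧ c₂₁ = 0`). -/
def GPEA.RDP2 {E : Type} (G : GPEA E) : Prop :=
  ∀ a1 a2 b1 b2 x : E, G.add a1 a2 = some x → G.add b1 b2 = some x →
    ∃ c11 c12 c21 c22 : E, G.add c11 c12 = some a1 ∧ G.add c21 c22 = some a2 ∧
      G.add c11 c21 = some b1 ∧ G.add c12 c22 = some b2 ∧
      (∀ z : E, G.le z c12 → G.le z c21 → z = G.zero)

/-- RDP₀ for a GPEA. -/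
def GPEA.RDP0 {E : Type} (G : GPEA E) : Prop :=
  ∀ a b c x : E, G.add b c = some x → G.le a x →
    ∃ b1 c1 : E, G.le b1 b ∧ G.le c1 c ∧ G.add b1 c1 = some a

/-- RDP for a PEA. -/
def PEA.RDP {E : Type} (P : PEA E) : Prop :=
  ∀ a1 a2 b1 b2 x : E, P.add a1 a2 = some x → P.add b1 b2 = some x →
    ∃ c11 c12 c21 c22 : E, P.add c11 c12 = some a1 ∧ P.add c21 c22 = some a2 ∧
      P.add c11 c21 = some b1 ∧ P.add c12 c22 = some b2

/-- RDP₁ for a PEA. -/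
def PEA.RDP1 {E : Type} (P : PEA E) : Prop :=
  ∀ a1 a2 b1 b2 x : E, P.add a1 a2 = some x → P.add b1 b2 = some x →
    ∃ c11 c12 c21 c22 : E, P.add c11 c12 = some a1 ∧ P.add c21 c22 = some a2 ∧
      P.add c11 c21 = some b1 ∧ P.add c12 c22 = some b2 ∧
      (∀ u v : E, P.le u c12 → P.le v c21 → P.add u v = P.add v u)

/-- RDP₂ for a PEA. -/
def PEA.RDP2 {E : Type} (P : PEA E) : Prop :=
  ∀ a1 a2 b1 b2 x : E, P.add a1 a2 = some x → P.add b1 b2 = some x →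
    ∃ c11 c12 c21 c22 : E, P.add c11 c12 = some a1 ∧ P.add c21 c22 = some a2 ∧
      P.add c11 c21 = some b1 ∧ P.add c12 c22 = some b2 ∧
      (∀ z : E, P.le z c12 → P.le z c21 → z = P.zero)

/-- RDP₀ for a PEA. -/
def PEA.RDP0 {E : Type} (P : PEA E) : Prop :=
  ∀ a b c x : E, P.add b c = some x → P.le a x →
    ∃ b1 c1 : E, P.le b1 b ∧ P.le c1 c ∧ P.add b1 c1 = some a

/-- Ideal of a GPEA. -/
def GPEA.isIdeal {E : Type} (G : GPEA E) (A : Set E) : Prop :=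
  G.zero ∈ A ∧ (∀ x y z : E, x ∈ A → y ∈ A → G.add x y = some z → z ∈ A) ∧
  (∀ x y : E, G.le x y → y ∈ A → x ∈ A)

/-- Normal ideal of a GPEA: `x + A = A + x` for all `x`. -/
def GPEA.isNormalIdeal {E : Type} (G : GPEA E) (A : Set E) : Prop :=
  G.isIdeal A ∧
  ∀ x : E, {z | ∃ y ∈ A, G.add x y = some z} = {z | ∃ y ∈ A, G.add y x = some z}

/-- Ideal of a PEA. -/
def PEA.isIdeal {E : Type} (P : PEA E) (A : Set E) : Prop :=
  P.zero ∈ A ∧ (∀ x y z : E, x ∈ A → y ∈ A → P.add x y = some z → z ∈ A) ∧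
  (∀ x y : E, P.le x y → y ∈ A → x ∈ A)

/-- Normal ideal of a PEA. -/
def PEA.isNormalIdeal {E : Type} (P : PEA E) (A : Set E) : Prop :=
  P.isIdeal A ∧
  ∀ x : E, {z | ∃ y ∈ A, P.add x y = some z} = {z | ∃ y ∈ A, P.add y x = some z}

/-- Maximal ideal of a PEA: proper and not properly contained in any proper ideal. -/
def PEA.isMaximalIdeal {E : Type} (P : PEA E) (A : Set E) : Prop :=
  P.isIdeal A ∧ A ≠ Set.univ ∧
  ∀ B : Set E, P.isIdeal B → A ⊆ B → B = A ∨ B = Set.univ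

/-- `i` and `j` are connected: `(ρ∘λ⁻¹)^m(i) = j` or `(λ∘ρ⁻¹)^m(i) = j` for some `m ≥ 0`. -/
def connected {I : Type} (l r : I ≃ I) (i j : I) : Prop :=
  ∃ m : ℕ, (fun x => r (l.symm x))^[m] i = j ∨ (fun x => l (r.symm x))^[m] i = j

/-- If `G₀` is a convex subset of the positive cone of a po-group
`G` containing `0`, then `G₀` with the group addition restricted to pairs whose
sum lies again in `G₀` is a generalized pseudo effect algebra. -/
theorem convex_subset_gpea {G : Type} [AddGroup G] [PartialOrder G]
    [CovariantClass G G (· + ·) (· ≤ ·)]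
    [CovariantClass G G (Function.swap (· + ·)) (· ≤ ·)]
    (G0 : Set G) (hpos : ∀ g ∈ G0, 0 ≤ g) (h0 : (0 : G) ∈ G0)
    (hconv : ∀ a ∈ G0, ∀ b ∈ G0, ∀ c : G, a ≤ c → c ≤ b → c ∈ G0) :
    ∃ Gp : GPEA G0,
      (∀ a b : G0,
        Gp.add a b = if h : a.1 + b.1 ∈ G0 then some ⟨a.1 + b.1, h⟩ else none) ∧
      Gp.zero = ⟨0, h0⟩ := by
  classical
  set A : G0 → G0 → Option G0 := fun a b =>
    if h : a.1 + b.1 ∈ G0 then some ⟨a.1 + b.1, h⟩ else none with hA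
  have hiff : ∀ a b c : G0, A a b = some c ↔ a.1 + b.1 ∈ G0 ∧ c.1 = a.1 + b.1 := by
    intro a b c
    constructor
    · intro h
      by_cases hm : a.1 + b.1 ∈ G0
      · simp only [hA, hm, dite_true] at h
        exact ⟨hm, by rw [← Option.some_inj.mp h]⟩
      · simp [hA, hm] at h
    · rintro ⟨hm, hc⟩
      simp only [hA, hm, dite_true]
      exact congrArg some (Subtype.ext hc.symm)
  have hS : ∀ a b : G0, (A a b).isSome ↔ a.1 + b.1 ∈ G0 := by
    intro a b
    by_cases hm : a.1 + b.1 ∈ G0 <;> simp [hA, hm]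
  have hmem : ∀ x : G, 0 ≤ x → ∀ y ∈ G0, x ≤ y → x ∈ G0 := by
    intro x hx y hy hxy
    exact hconv 0 h0 y hy x hx hxy
  refine ⟨⟨A, ⟨0, h0⟩, ?_, ?_, ?_, ?_, ?_, ?_, ?_, ?_⟩, fun a b => rfl, rfl⟩
  · -- assoc_ex
    intro a b c
    constructor
    · rintro ⟨ab, hab, hs⟩
      obtain ⟨hm1, he1⟩ := (hiff a b ab).mp hab
      have hm2 : ab.1 + c.1 ∈ G0 := (hS ab c).mp hs
      have htot : a.1 + (b.1 + c.1) ∈ G0 := by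
        rw [← add_assoc, ← he1]; exact hm2
      have hbc : b.1 + c.1 ∈ G0 := by
        refine hmem _ (add_nonneg (hpos _ b.2) (hpos _ c.2)) _ htot ?_
        exact le_add_of_nonneg_left (hpos _ a.2)
      exact ⟨⟨b.1 + c.1, hbc⟩, (hiff b c _).mpr ⟨hbc, rfl⟩, (hS a _).mpr htot⟩
    · rintro ⟨bc, hbc, hs⟩
      obtain ⟨hm1, he1⟩ := (hiff b c bc).mp hbc
      have hm2 : a.1 + bc.1 ∈ G0 := (hS a bc).mp hs
      have htot : (a.1 + b.1) + c.1 ∈ G0 := by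
        rw [add_assoc, ← he1]; exact hm2
      have hab : a.1 + b.1 ∈ G0 := by
        refine hmem _ (add_nonneg (hpos _ a.2) (hpos _ b.2)) _ htot ?_
        exact le_add_of_nonneg_right (hpos _ c.2)
      exact ⟨⟨a.1 + b.1, hab⟩, (hiff a b _).mpr ⟨hab, rfl⟩, (hS _ c).mpr htot⟩
  · -- assoc_eq
    intro a b c ab bc hab hbc
    obtain ⟨_, he1⟩ := (hiff a b ab).mp hab
    obtain ⟨_, he2⟩ := (hiff b c bc).mp hbc
    have key : ab.1 + c.1 = a.1 + bc.1 := by rw [he1, he2, add_assoc]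
    simp only [hA, key]
  · -- exch
    intro a b ab hab
    obtain ⟨hm, he⟩ := (hiff a b ab).mp hab
    refine ⟨⟨⟨a.1 + b.1 + -a.1, ?_⟩, ?_⟩, ⟨⟨-b.1 + (a.1 + b.1), ?_⟩, ?_⟩⟩
    · refine hmem _ ?_ _ hm ?_
      · have : a.1 + 0 + -a.1 ≤ a.1 + b.1 + -a.1 := by
          apply add_le_add_left
          exact add_le_add_right (hpos _ b.2) _
        simpa using this
      · calc a.1 + b.1 + -a.1 ≤ a.1 + b.1 + 0 :=
              add_le_add_right (neg_nonpos.mpr (hpos _ a.2)) _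
          _ = a.1 + b.1 := add_zero _
    · refine (hiff _ a ab).mpr ⟨?_, ?_⟩ <;> simp [he, hm]
    · refine hmem _ ?_ _ hm ?_
      · have : -b.1 + (0 + b.1) ≤ -b.1 + (a.1 + b.1) := by
          apply add_le_add_right
          exact add_le_add_left (hpos _ a.2) _
        simpa using this
      · calc -b.1 + (a.1 + b.1) ≤ 0 + (a.1 + b.1) :=
              add_le_add_left (neg_nonpos.mpr (hpos _ b.2)) _
          _ = a.1 + b.1 := zero_add _
    · refine (hiff b _ ab).mpr ⟨?_, ?_⟩ <;> simp [he, hm]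
  · -- cancel_left
    intro a b c x h1 h2
    obtain ⟨_, e1⟩ := (hiff a b x).mp h1
    obtain ⟨_, e2⟩ := (hiff a c x).mp h2
    exact Subtype.ext (add_left_cancel (e1.symm.trans e2))
  · -- cancel_right
    intro a b c x h1 h2
    obtain ⟨_, e1⟩ := (hiff b a x).mp h1
    obtain ⟨_, e2⟩ := (hiff c a x).mp h2
    exact Subtype.ext (add_right_cancel (e1.symm.trans e2))
  · -- pos
    intro a b h
    obtain ⟨_, e⟩ := (hiff a b _).mp h
    have e' : a.1 + b.1 = 0 := e.symm
    have ha : a.1 = 0 := le_antisymm (by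
      calc a.1 = a.1 + 0 := (add_zero _).symm
        _ ≤ a.1 + b.1 := add_le_add_right (hpos _ b.2) _
        _ = 0 := e') (hpos _ a.2)
    have hb : b.1 = 0 := by
      have := e'; rw [ha, zero_add] at this; exact this
    exact ⟨Subtype.ext ha, Subtype.ext hb⟩
  · -- add_zero
    intro a
    exact (hiff a ⟨0, h0⟩ a).mpr ⟨by simpa using a.2, by simp⟩
  · -- zero_add
    intro a
    exact (hiff ⟨0, h0⟩ a a).mpr ⟨by simpa using a.2, by simp⟩
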